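/- Monotonicity under the softmax parametrization (Theorem 1b): for a finite MDP, any sequence of policies (π_t) generated by softmax-parametrization policy updates with exact value functions satisfies, for all t, all states s and all actions a, v_{t+1}(s) ≥ v_t(s) and q_{t+1}(s,a) ≥ q_t(s,a). -/

import Mathlib

open Finset Filter

/-- `v` is the state value function of policy `π` (Bellman equation). -/
def IsValueOf {S A : Type*} [Fintype S] [Fintype A]
    (p : S → A → S → ℝ) (r : S → A → ℝ) (γ : ℝ)
    (π : S → A → ℝ) (v : S → ℝ) : Prop :=
  ∀ s, v s = ∑ a, π s a * (r s a + γ * ∑ s', p s a s' * v s')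

/-- The softmax policy associated with parameters `θ`. -/
noncomputable def softmaxPol {S A : Type*} [Fintype A] (θ : S → A → ℝ) (s : S) (a : A) : ℝ :=
  Real.exp (θ s a) / ∑ a', Real.exp (θ s a')

lemma softmax_denom_pos {S A : Type*} [Fintype A] [Nonempty A] (θ : S → A → ℝ) (s : S) :
    0 < ∑ a', Real.exp (θ s a') :=
  Finset.sum_pos (fun a' _ => Real.exp_pos _) Finset.univ_nonempty

lemma softmax_pos {S A : Type*} [Fintype A] [Nonempty A] (θ : S → A → ℝ) (s : S) (a : A) :
    0 < softmaxPol θ s a :=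
  div_pos (Real.exp_pos _) (softmax_denom_pos θ s)

lemma softmax_sum {S A : Type*} [Fintype A] [Nonempty A] (θ : S → A → ℝ) (s : S) :
    ∑ a, softmaxPol θ s a = 1 := by
  simp only [softmaxPol]
  rw [← Finset.sum_div]
  exact div_self (softmax_denom_pos θ s).ne'

lemma key_exp (x c : ℝ) (h : 0 ≤ c * x) : x ≤ Real.exp c * x := by
  rcases le_or_gt 0 x with hx | hx
  · nlinarith [Real.add_one_le_exp c]
  · have hc : c ≤ 0 := by nlinarith
    have h1 : Real.exp c ≤ 1 := by
      rw [← Real.exp_zero]; exact Real.exp_le_exp.mpr hc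
    nlinarith

/-- **Monotonicity under the softmax parametrization** (Theorem 1b):
any sequence of policies generated by softmax-parametrization policy updates
with exact value functions has monotonically increasing values `v_t` and `q_t`. -/
theorem monotonicity_softmax
    {S A : Type*} [Fintype S] [Nonempty S] [Fintype A] [Nonempty A]
    (p : S → A → S → ℝ) (hp : ∀ s a s', 0 ≤ p s a s')
    (hpsum : ∀ s a, ∑ s', p s a s' = 1)
    (r : S → A → ℝ) (γ : ℝ) (hγ0 : 0 ≤ γ) (hγ1 : γ < 1)
    (η : ℕ → ℝ) (hη : ∀ t, 0 < η t)
    (d : ℕ → S → ℝ) (hd : ∀ t s, 0 < d t s)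
    (θ : ℕ → S → A → ℝ)
    (v : ℕ → S → ℝ) (hv : ∀ t, IsValueOf p r γ (softmaxPol (θ t)) (v t))
    (q : ℕ → S → A → ℝ)
    (hq : ∀ t s a, q t s a = r s a + γ * ∑ s', p s a s' * v t s')
    (hupd : ∀ t s a, θ (t + 1) s a
      = θ t s a + η t * d t s * softmaxPol (θ t) s a * (q t s a - v t s)) :
    ∀ t s a, v t s ≤ v (t + 1) s ∧ q t s a ≤ q (t + 1) s a := by
  intro t s a
  set π := softmaxPol (θ t) with hπ
  set π' := softmaxPol (θ (t + 1)) with hπ'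
  -- v as expectation of q
  have hvq : ∀ s, v t s = ∑ a, π s a * q t s a := by
    intro s
    rw [hv t s]
    exact Finset.sum_congr rfl fun a _ => by rw [hq]
  -- Step C: improvement of expected q under the new policy
  have himp : ∀ s, v t s ≤ ∑ a, π' s a * q t s a := by
    intro s
    set x : A → ℝ := fun a => q t s a - v t s with hx
    have hsum0 : ∑ a, π s a * x a = 0 := by
      have : ∑ a, π s a * x a = (∑ a, π s a * q t s a) - (∑ a, π s a) * (v t s) := by
        rw [Finset.sum_mul, ← Finset.sum_sub_distrib]
        exact Finset.sum_congr rfl fun a _ => by rw [hx]; ring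
      rw [this, softmax_sum, ← hvq]; ring
    -- the exponentiated weights
    have hZ : (0:ℝ) < ∑ a', Real.exp (θ t s a') := softmax_denom_pos _ s
    have hZ' : (0:ℝ) < ∑ a', Real.exp (θ (t+1) s a') := softmax_denom_pos _ s
    have hterm : ∀ a, Real.exp (θ t s a) * x a ≤ Real.exp (θ (t+1) s a) * x a := by
      intro a
      have : Real.exp (θ (t+1) s a) =
          Real.exp (θ t s a) * Real.exp (η t * d t s * π s a * x a) := by
        rw [hupd t s a, Real.exp_add, hx]
      rw [this]
      have hπpos : (0:ℝ) ≤ π s a := (softmax_pos (θ t) s a).le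
      have hcx : 0 ≤ (η t * d t s * π s a * x a) * x a := by
        have h := mul_nonneg (mul_nonneg (mul_nonneg (hη t).le (hd t s).le) hπpos)
          (sq_nonneg (x a))
        nlinarith [h]
      calc Real.exp (θ t s a) * x a
          = Real.exp (θ t s a) * (1 * x a) := by ring
        _ ≤ Real.exp (θ t s a) * (Real.exp (η t * d t s * π s a * x a) * x a) := by
            apply mul_le_mul_of_nonneg_left _ (Real.exp_pos _).le
            rw [one_mul]
            exact key_exp _ _ hcx
        _ = Real.exp (θ t s a) * Real.exp (η t * d t s * π s a * x a) * x a := by ring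
    have hexp0 : (0:ℝ) ≤ ∑ a, Real.exp (θ (t+1) s a) * x a := by
      have h1 : ∑ a, Real.exp (θ t s a) * x a = 0 := by
        have : ∑ a, Real.exp (θ t s a) * x a
            = (∑ a', Real.exp (θ t s a')) * ∑ a, π s a * x a := by
          rw [Finset.mul_sum]
          refine Finset.sum_congr rfl fun a _ => ?_
          rw [hπ, softmaxPol]
          rw [div_mul_eq_mul_div, mul_div_assoc', mul_div_cancel_left₀ _ hZ.ne']
        rw [this, hsum0, mul_zero]
      calc (0:ℝ) = ∑ a, Real.exp (θ t s a) * x a := h1.symm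
        _ ≤ _ := Finset.sum_le_sum fun a _ => hterm a
    have hπ'x : (0:ℝ) ≤ ∑ a, π' s a * x a := by
      have : ∑ a, π' s a * x a
          = (∑ a, Real.exp (θ (t+1) s a) * x a) / (∑ a', Real.exp (θ (t+1) s a')) := by
        rw [Finset.sum_div]
        refine Finset.sum_congr rfl fun a _ => ?_
        rw [hπ', softmaxPol]
        ring
      rw [this]
      exact div_nonneg hexp0 hZ'.le
    have : ∑ a, π' s a * x a = (∑ a, π' s a * q t s a) - v t s := by
      have h2 : ∑ a, π' s a * x a = (∑ a, π' s a * q t s a) - (∑ a, π' s a) * v t s := by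
        rw [Finset.sum_mul, ← Finset.sum_sub_distrib]
        exact Finset.sum_congr rfl fun a _ => by rw [hx]; ring
      rw [h2, softmax_sum, one_mul]
    linarith [this ▸ hπ'x]
  -- Step D: v monotone
  have hvmono : ∀ s, v t s ≤ v (t + 1) s := by
    set u : S → ℝ := fun s => v (t+1) s - v t s with hu
    have hdiff : ∀ s, v (t+1) s - ∑ a, π' s a * q t s a
        = γ * ∑ a, π' s a * ∑ s', p s a s' * u s' := by
      intro s
      rw [hv (t+1) s, Finset.mul_sum, ← Finset.sum_sub_distrib]
      refine Finset.sum_congr rfl fun a _ => ?_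
      rw [hq]
      have hin : ∑ s', p s a s' * u s'
          = (∑ s', p s a s' * v (t+1) s') - ∑ s', p s a s' * v t s' := by
        rw [← Finset.sum_sub_distrib]
        exact Finset.sum_congr rfl fun s' _ => by rw [hu]; ring
      rw [hin]; ring
    obtain ⟨s0, _, hs0min⟩ := Finset.exists_min_image Finset.univ u ⟨Classical.arbitrary S, Finset.mem_univ _⟩
    have hs0min' : ∀ s', u s0 ≤ u s' := fun s' => hs0min s' (Finset.mem_univ _)
    have h1 : ∀ a, u s0 ≤ ∑ s', p s0 a s' * u s' := by
      intro a
      calc u s0 = (∑ s', p s0 a s') * u s0 := by rw [hpsum, one_mul]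
        _ = ∑ s', p s0 a s' * u s0 := by rw [Finset.sum_mul]
        _ ≤ ∑ s', p s0 a s' * u s' :=
            Finset.sum_le_sum fun s' _ => mul_le_mul_of_nonneg_left (hs0min' s') (hp _ _ _)
    have h2 : u s0 ≤ ∑ a, π' s0 a * ∑ s', p s0 a s' * u s' := by
      calc u s0 = (∑ a, π' s0 a) * u s0 := by rw [softmax_sum, one_mul]
        _ = ∑ a, π' s0 a * u s0 := by rw [Finset.sum_mul]
        _ ≤ _ := Finset.sum_le_sum fun a _ =>
            mul_le_mul_of_nonneg_left (h1 a) (softmax_pos _ _ _).le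
    have h3 : γ * u s0 ≤ γ * ∑ a, π' s0 a * ∑ s', p s0 a s' * u s' :=
      mul_le_mul_of_nonneg_left h2 hγ0
    have h4 := hdiff s0
    have h5 := himp s0
    have hus0 : 0 ≤ u s0 := by
      have : u s0 = (v (t+1) s0 - ∑ a, π' s0 a * q t s0 a)
          + ((∑ a, π' s0 a * q t s0 a) - v t s0) := by rw [hu]; ring
      nlinarith
    intro s
    have := hs0min' s
    rw [hu] at *
    simp only at this hus0
    linarith
  -- Step E: q monotone
  refine ⟨hvmono s, ?_⟩
  rw [hq t s a, hq (t+1) s a]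
  have : ∑ s', p s a s' * v t s' ≤ ∑ s', p s a s' * v (t+1) s' :=
    Finset.sum_le_sum fun s' _ => mul_le_mul_of_nonneg_left (hvmono s') (hp _ _ _)
  nlinarith
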